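/- Let B₁, B₂ ≥ 0 and x, y > 0 be reals. Set a = B₁²·x·(B₂ + y)/(1 + B₁·y), b = B₁²·y·(B₂ + x)/(1 + B₁·x), w = B₁·B₂, and let A be the 4×4 real matrix with rows (0, a, 0, a), (b, 0, b, 0), (0, 1, 0, w), (1, 0, w, 0). Then the characteristic polynomial of A equals (X² − e₁²)·(X² − e₃²), where e₁² = B₁²·(1 − B₁·B₂)²·x·y/((1 + B₁·x)·(1 + B₁·y)) and e₃² = B₁²·(B₂ + x)·(B₂ + y). In particular the eigenvalues of A are ±e₁ and ±e₃. -/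

import Mathlib

set_option maxHeartbeats 1600000

open Polynomial Matrix


private theorem detfin4 : ∀ M : Matrix (Fin 4) (Fin 4) ℝ, M.det =
      M 0 0 * (M 1 1 * (M 2 2 * M 3 3 - M 2 3 * M 3 2)
        - M 1 2 * (M 2 1 * M 3 3 - M 2 3 * M 3 1)
        + M 1 3 * (M 2 1 * M 3 2 - M 2 2 * M 3 1))
      - M 0 1 * (M 1 0 * (M 2 2 * M 3 3 - M 2 3 * M 3 2)
        - M 1 2 * (M 2 0 * M 3 3 - M 2 3 * M 3 0)
        + M 1 3 * (M 2 0 * M 3 2 - M 2 2 * M 3 0))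
      + M 0 2 * (M 1 0 * (M 2 1 * M 3 3 - M 2 3 * M 3 1)
        - M 1 1 * (M 2 0 * M 3 3 - M 2 3 * M 3 0)
        + M 1 3 * (M 2 0 * M 3 1 - M 2 1 * M 3 0))
      - M 0 3 * (M 1 0 * (M 2 1 * M 3 2 - M 2 2 * M 3 1)
        - M 1 1 * (M 2 0 * M 3 2 - M 2 2 * M 3 0)
        + M 1 2 * (M 2 0 * M 3 1 - M 2 1 * M 3 0)) := by
  intro M
  rw [Matrix.det_succ_row_zero]
  simp [Fin.sum_univ_succ, Matrix.det_fin_three, Fin.succAbove,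
    Matrix.submatrix_apply, Fin.succ,
    show (Fin.castSucc 2 : Fin 4) = 2 from rfl]
  norm_num
  ring



/-- The transfer-matrix eigenvalue computation in the proof of Lemma 6.2 of
the paper: with `a = B₁²x(B₂+y)/(1+B₁y)`, `b = B₁²y(B₂+x)/(1+B₁x)`,
`w = B₁B₂`, the matrix `A` with rows `(0,a,0,a), (b,0,b,0), (0,1,0,w),
(1,0,w,0)` has characteristic polynomial `(X² - e₁²)(X² - e₃²)` where
`e₁² = B₁²(1-B₁B₂)²xy/((1+B₁x)(1+B₁y))` and `e₃² = B₁²(B₂+x)(B₂+y)`. -/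
theorem transfer_matrix_charpoly (B₁ B₂ x y : ℝ)
    (hB₁ : 0 ≤ B₁) (hB₂ : 0 ≤ B₂) (hx : 0 < x) (hy : 0 < y) :
    Matrix.charpoly
      (!![0, B₁ ^ 2 * x * (B₂ + y) / (1 + B₁ * y), 0,
            B₁ ^ 2 * x * (B₂ + y) / (1 + B₁ * y);
          B₁ ^ 2 * y * (B₂ + x) / (1 + B₁ * x), 0,
            B₁ ^ 2 * y * (B₂ + x) / (1 + B₁ * x), 0;
          0, 1, 0, B₁ * B₂;
          1, 0, B₁ * B₂, 0] : Matrix (Fin 4) (Fin 4) ℝ) =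
      (Polynomial.X ^ 2 -
          Polynomial.C (B₁ ^ 2 * (1 - B₁ * B₂) ^ 2 * x * y /
            ((1 + B₁ * x) * (1 + B₁ * y)))) *
        (Polynomial.X ^ 2 - Polynomial.C (B₁ ^ 2 * (B₂ + x) * (B₂ + y))) := by
  have hxd : (1 + B₁ * x) ≠ 0 := by positivity
  have hyd : (1 + B₁ * y) ≠ 0 := by positivity
  set a := B₁ ^ 2 * x * (B₂ + y) / (1 + B₁ * y) with ha
  set b := B₁ ^ 2 * y * (B₂ + x) / (1 + B₁ * x) with hb
  apply Polynomial.funext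
  intro t
  rw [Matrix.charpoly, ← Polynomial.coe_evalRingHom, RingHom.map_det]
  have hM : (charmatrix (!![0, a, 0, a; b, 0, b, 0; 0, 1, 0, B₁ * B₂;
      1, 0, B₁ * B₂, 0] : Matrix (Fin 4) (Fin 4) ℝ)).map (evalRingHom t) =
      !![t, -a, 0, -a; -b, t, -b, 0; 0, -1, t, -(B₁ * B₂);
         -1, 0, -(B₁ * B₂), t] := by
    ext i j
    fin_cases i <;> fin_cases j <;>
      simp [charmatrix_apply, Matrix.diagonal]
  rw [RingHom.mapMatrix_apply, hM]
  rw [show ∀ M : Matrix (Fin 4) (Fin 4) ℝ, M.det =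
      M 0 0 * (M 1 1 * (M 2 2 * M 3 3 - M 2 3 * M 3 2)
        - M 1 2 * (M 2 1 * M 3 3 - M 2 3 * M 3 1)
        + M 1 3 * (M 2 1 * M 3 2 - M 2 2 * M 3 1))
      - M 0 1 * (M 1 0 * (M 2 2 * M 3 3 - M 2 3 * M 3 2)
        - M 1 2 * (M 2 0 * M 3 3 - M 2 3 * M 3 0)
        + M 1 3 * (M 2 0 * M 3 2 - M 2 2 * M 3 0))
      + M 0 2 * (M 1 0 * (M 2 1 * M 3 3 - M 2 3 * M 3 1)
        - M 1 1 * (M 2 0 * M 3 3 - M 2 3 * M 3 0)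
        + M 1 3 * (M 2 0 * M 3 1 - M 2 1 * M 3 0))
      - M 0 3 * (M 1 0 * (M 2 1 * M 3 2 - M 2 2 * M 3 1)
        - M 1 1 * (M 2 0 * M 3 2 - M 2 2 * M 3 0)
        + M 1 2 * (M 2 0 * M 3 1 - M 2 1 * M 3 0)) from detfin4]
  simp [ha, hb]
  field_simp
  ring
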